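/- Let W be a real random variable with E[W] = 0 and Var(W) = σ² ∈ (0, ∞). Then the function p*(x) = E[W · 1(W > x)]/σ² is nonnegative and integrates to 1 over ℝ, and the probability measure μ* on ℝ with density p* satisfies the zero-bias identity: for every differentiable function f : ℝ → ℝ with derivative f′ such that E|W f(W)| < ∞ and f′ is integrable with respect to μ*, one has E[W f(W)] = σ² ∫_ℝ f′ dμ*. -/

import Mathlib

open MeasureTheory Set

noncomputable section

set_option linter.unusedSectionVars false

namespace ZeroBiasAux

variable {Ω : Type*} [MeasurableSpace Ω]

/-- The (unnormalized) zero-bias density `T x = E[W 1(W > x)]`. -/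
def T (μ : Measure Ω) (W : Ω → ℝ) (x : ℝ) : ℝ :=
  ∫ ω, Set.indicator {ω' | x < W ω'} W ω ∂μ

variable {μ : Measure Ω} {W : Ω → ℝ}

lemma measSet (hWm : Measurable W) (x : ℝ) : MeasurableSet {ω' | x < W ω'} :=
  hWm measurableSet_Ioi

lemma measSetLe (hWm : Measurable W) (x : ℝ) : MeasurableSet {ω' | W ω' ≤ x} :=
  hWm measurableSet_Iic

lemma indInt (hWm : Measurable W) (hW : Integrable W μ) (x : ℝ) :
    Integrable (Set.indicator {ω' | x < W ω'} W) μ :=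
  hW.indicator (measSet hWm x)

lemma indIntNeg (hWm : Measurable W) (hW : Integrable W μ) (x : ℝ) :
    Integrable (Set.indicator {ω' | W ω' ≤ x} (fun ω' => -W ω')) μ :=
  hW.neg.indicator (measSetLe hWm x)

lemma T_eq_neg (hWm : Measurable W) (hW : Integrable W μ)
    (hmean : ∫ ω, W ω ∂μ = 0) (x : ℝ) :
    T μ W x = ∫ ω, Set.indicator {ω' | W ω' ≤ x} (fun ω' => -W ω') ω ∂μ := by
  have hsplit : ∀ ω, Set.indicator {ω' | x < W ω'} W ω
      = W ω + Set.indicator {ω' | W ω' ≤ x} (fun ω' => -W ω') ω := by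
    intro ω
    by_cases h : x < W ω
    · simp [Set.indicator, h, not_le.mpr h]
    · simp [Set.indicator, h, not_lt.mp h]
  rw [T]
  rw [integral_congr_ae (Filter.Eventually.of_forall hsplit),
    integral_add hW (indIntNeg hWm hW x), hmean, zero_add]

lemma T_nonneg (hWm : Measurable W) (hW : Integrable W μ)
    (hmean : ∫ ω, W ω ∂μ = 0) (x : ℝ) : 0 ≤ T μ W x := by
  rcases le_or_gt 0 x with hx | hx
  · refine integral_nonneg fun ω => ?_
    simp only [Pi.zero_apply]
    by_cases h : x < W ω
    · simp only [Set.indicator, Set.mem_setOf_eq, h, if_true]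
      linarith
    · simp [Set.indicator, h]
  · rw [T_eq_neg hWm hW hmean x]
    refine integral_nonneg fun ω => ?_
    simp only [Pi.zero_apply]
    by_cases h : W ω ≤ x
    · simp only [Set.indicator, Set.mem_setOf_eq, h, if_true]
      linarith
    · simp [Set.indicator, h]

lemma ind_prod_eq (x : ℝ) (ω : Ω) :
    Set.indicator {ω' | x < W ω'} W ω
      = Set.indicator {q : ℝ × Ω | q.1 < W q.2} (fun q => W q.2) (x, ω) := by
  simp [Set.indicator]

lemma ind_prod_eq_neg (x : ℝ) (ω : Ω) :
    Set.indicator {ω' | W ω' ≤ x} (fun ω' => -W ω') ω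
      = Set.indicator {q : ℝ × Ω | W q.2 ≤ q.1} (fun q => -W q.2) (x, ω) := by
  simp [Set.indicator]

lemma measSet_prod (hWm : Measurable W) : MeasurableSet {q : ℝ × Ω | q.1 < W q.2} :=
  measurableSet_lt measurable_fst (hWm.comp measurable_snd)

lemma measSet_prod_le (hWm : Measurable W) : MeasurableSet {q : ℝ × Ω | W q.2 ≤ q.1} :=
  measurableSet_le (hWm.comp measurable_snd) measurable_fst

lemma T_stronglyMeasurable [SFinite μ] (hWm : Measurable W) :
    StronglyMeasurable (T μ W) := by
  have h : StronglyMeasurable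
      (fun q : ℝ × Ω => Set.indicator {q : ℝ × Ω | q.1 < W q.2} (fun q => W q.2) q) :=
    (((hWm.comp measurable_snd).indicator (measSet_prod hWm))).stronglyMeasurable
  have h2 := h.integral_prod_right' (ν := μ)
  have heq : T μ W = fun x => ∫ y, Set.indicator {q : ℝ × Ω | q.1 < W q.2}
      (fun q => W q.2) (x, y) ∂μ := by
    funext x
    exact integral_congr_ae (Filter.Eventually.of_forall fun ω => (ind_prod_eq x ω))
  rw [heq]; exact h2

lemma lint_pos (hWm : Measurable W) (hW : Integrable W μ) {x : ℝ} (hx : 0 ≤ x) :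
    ∫⁻ ω, ENNReal.ofReal (Set.indicator {ω' | x < W ω'} W ω) ∂μ
      = ENNReal.ofReal (T μ W x) := by
  refine (ofReal_integral_eq_lintegral_ofReal (indInt hWm hW x)
    (Filter.Eventually.of_forall fun ω => ?_)).symm
  simp only [Pi.zero_apply]
  by_cases h : x < W ω
  · simp only [Set.indicator, Set.mem_setOf_eq, h, if_true]; linarith
  · simp [Set.indicator, h]

lemma lint_neg (hWm : Measurable W) (hW : Integrable W μ)
    (hmean : ∫ ω, W ω ∂μ = 0) {x : ℝ} (hx : x < 0) :
    ∫⁻ ω, ENNReal.ofReal (Set.indicator {ω' | W ω' ≤ x} (fun ω' => -W ω') ω) ∂μ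
      = ENNReal.ofReal (T μ W x) := by
  rw [T_eq_neg hWm hW hmean x]
  refine (ofReal_integral_eq_lintegral_ofReal (indIntNeg hWm hW x)
    (Filter.Eventually.of_forall fun ω => ?_)).symm
  simp only [Pi.zero_apply]
  by_cases h : W ω ≤ x
  · simp only [Set.indicator, Set.mem_setOf_eq, h, if_true]; linarith
  · simp [Set.indicator, h]

lemma sq_max_integrable (hWm : Measurable W) (hW2 : Integrable (fun ω => W ω ^ 2) μ) :
    Integrable (fun ω => max (W ω) 0 ^ 2) μ := by
  refine hW2.mono ((hWm.max measurable_const).pow_const 2).aestronglyMeasurable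
    (Filter.Eventually.of_forall fun ω => ?_)
  simp only [Real.norm_eq_abs, abs_sq]
  rcases le_total (W ω) 0 with h | h
  · simp [max_eq_right h, sq_nonneg]
  · simp [max_eq_left h]

lemma sq_min_integrable (hWm : Measurable W) (hW2 : Integrable (fun ω => W ω ^ 2) μ) :
    Integrable (fun ω => min (W ω) 0 ^ 2) μ := by
  refine hW2.mono ((hWm.min measurable_const).pow_const 2).aestronglyMeasurable
    (Filter.Eventually.of_forall fun ω => ?_)
  simp only [Real.norm_eq_abs, abs_sq]
  rcases le_total (W ω) 0 with h | h
  · simp [min_eq_left h]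
  · simp [min_eq_right h, sq_nonneg]

lemma lintegral_T [IsProbabilityMeasure μ] (hWm : Measurable W) (hW : Integrable W μ)
    (hmean : ∫ ω, W ω ∂μ = 0) (hW2 : Integrable (fun ω => W ω ^ 2) μ) :
    ∫⁻ x, ENNReal.ofReal (T μ W x) = ENNReal.ofReal (∫ ω, W ω ^ 2 ∂μ) := by
  have hmP : Measurable fun q : ℝ × Ω =>
      ENNReal.ofReal (Set.indicator {q : ℝ × Ω | q.1 < W q.2} (fun q => W q.2) q) :=
    ((hWm.comp measurable_snd).indicator (measSet_prod hWm)).ennreal_ofReal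
  have hmN : Measurable fun q : ℝ × Ω =>
      ENNReal.ofReal (Set.indicator {q : ℝ × Ω | W q.2 ≤ q.1} (fun q => -W q.2) q) :=
    ((hWm.comp measurable_snd).neg.indicator (measSet_prod_le hWm)).ennreal_ofReal
  -- positive part
  have hpos : ∫⁻ x in Ici (0:ℝ), ENNReal.ofReal (T μ W x)
      = ENNReal.ofReal (∫ ω, max (W ω) 0 ^ 2 ∂μ) := by
    have h1 : ∫⁻ x in Ici (0:ℝ), ENNReal.ofReal (T μ W x)
        = ∫⁻ x in Ici (0:ℝ), (∫⁻ ω, ENNReal.ofReal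
            (Set.indicator {q : ℝ × Ω | q.1 < W q.2} (fun q => W q.2) (x, ω)) ∂μ) ∂volume := by
      refine setLIntegral_congr_fun measurableSet_Ici
        (fun x hx => ?_)
      rw [← lint_pos hWm hW hx]
      exact lintegral_congr fun ω => by rw [ind_prod_eq]
    rw [h1, lintegral_lintegral_swap hmP.aemeasurable]
    have h2 : ∀ ω, (∫⁻ x in Ici (0:ℝ), ENNReal.ofReal
        (Set.indicator {q : ℝ × Ω | q.1 < W q.2} (fun q => W q.2) (x, ω)) ∂volume)
        = ENNReal.ofReal (max (W ω) 0 ^ 2) := by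
      intro ω
      have heq : (fun x : ℝ => ENNReal.ofReal
          (Set.indicator {q : ℝ × Ω | q.1 < W q.2} (fun q => W q.2) (x, ω)))
          = Set.indicator (Iio (W ω)) (fun _ => ENNReal.ofReal (W ω)) := by
        funext x
        by_cases h : x < W ω
        · simp [Set.indicator, h]
        · simp [Set.indicator, h]
      rw [heq, lintegral_indicator measurableSet_Iio, Measure.restrict_restrict measurableSet_Iio,
        setLIntegral_const, inter_comm, Ici_inter_Iio, Real.volume_Ico]
      rcases le_total (W ω) 0 with h | h
      · simp [ENNReal.ofReal_of_nonpos h, max_eq_right h]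
      · rw [← ENNReal.ofReal_mul h, max_eq_left h, sub_zero, sq]
    rw [lintegral_congr h2]
    exact (ofReal_integral_eq_lintegral_ofReal (sq_max_integrable hWm hW2)
      (Filter.Eventually.of_forall fun ω => sq_nonneg _)).symm
  -- negative part
  have hneg : ∫⁻ x in Iio (0:ℝ), ENNReal.ofReal (T μ W x)
      = ENNReal.ofReal (∫ ω, min (W ω) 0 ^ 2 ∂μ) := by
    have h1 : ∫⁻ x in Iio (0:ℝ), ENNReal.ofReal (T μ W x)
        = ∫⁻ x in Iio (0:ℝ), (∫⁻ ω, ENNReal.ofReal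
            (Set.indicator {q : ℝ × Ω | W q.2 ≤ q.1} (fun q => -W q.2) (x, ω)) ∂μ) ∂volume := by
      refine setLIntegral_congr_fun measurableSet_Iio
        (fun x hx => ?_)
      rw [← lint_neg hWm hW hmean hx]
      exact lintegral_congr fun ω => by rw [ind_prod_eq_neg]
    rw [h1, lintegral_lintegral_swap hmN.aemeasurable]
    have h2 : ∀ ω, (∫⁻ x in Iio (0:ℝ), ENNReal.ofReal
        (Set.indicator {q : ℝ × Ω | W q.2 ≤ q.1} (fun q => -W q.2) (x, ω)) ∂volume)
        = ENNReal.ofReal (min (W ω) 0 ^ 2) := by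
      intro ω
      have heq : (fun x : ℝ => ENNReal.ofReal
          (Set.indicator {q : ℝ × Ω | W q.2 ≤ q.1} (fun q => -W q.2) (x, ω)))
          = Set.indicator (Ici (W ω)) (fun _ => ENNReal.ofReal (-W ω)) := by
        funext x
        by_cases h : W ω ≤ x
        · simp [Set.indicator, h]
        · simp [Set.indicator, h]
      rw [heq, lintegral_indicator measurableSet_Ici, Measure.restrict_restrict measurableSet_Ici,
        setLIntegral_const, Ici_inter_Iio, Real.volume_Ico]
      rcases le_total (W ω) 0 with h | h
      · rw [← ENNReal.ofReal_mul (by linarith), min_eq_left h, sq, zero_sub]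
        ring_nf
      · have : ENNReal.ofReal (-W ω) = 0 := ENNReal.ofReal_of_nonpos (by linarith)
        simp [this, min_eq_right h]
    rw [lintegral_congr h2]
    exact (ofReal_integral_eq_lintegral_ofReal (sq_min_integrable hWm hW2)
      (Filter.Eventually.of_forall fun ω => sq_nonneg _)).symm
  have hsplit := lintegral_add_compl (fun x => ENNReal.ofReal (T μ W x))
    (measurableSet_Iio (a := (0:ℝ))) (μ := volume)
  rw [compl_Iio] at hsplit
  rw [← hsplit, hpos, hneg, ← ENNReal.ofReal_add (integral_nonneg fun ω => sq_nonneg _)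
    (integral_nonneg fun ω => sq_nonneg _),
    ← integral_add (sq_min_integrable hWm hW2) (sq_max_integrable hWm hW2)]
  congr 1
  refine integral_congr_ae (Filter.Eventually.of_forall fun ω => ?_)
  rcases le_total (W ω) 0 with h | h
  · simp [min_eq_left h, max_eq_right h]
  · simp [min_eq_right h, max_eq_left h]

lemma T_integrable [IsProbabilityMeasure μ] (hWm : Measurable W) (hW : Integrable W μ)
    (hmean : ∫ ω, W ω ∂μ = 0) (hW2 : Integrable (fun ω => W ω ^ 2) μ) :
    Integrable (T μ W) volume := by
  refine ⟨(T_stronglyMeasurable hWm).aestronglyMeasurable, ?_⟩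
  rw [hasFiniteIntegral_iff_norm]
  have : ∀ x : ℝ, ENNReal.ofReal ‖T μ W x‖ = ENNReal.ofReal (T μ W x) := fun x => by
    rw [Real.norm_eq_abs, abs_of_nonneg (T_nonneg hWm hW hmean x)]
  simp only [this]
  rw [lintegral_T hWm hW hmean hW2]
  exact ENNReal.ofReal_lt_top

lemma integral_T [IsProbabilityMeasure μ] (hWm : Measurable W) (hW : Integrable W μ)
    (hmean : ∫ ω, W ω ∂μ = 0) (hW2 : Integrable (fun ω => W ω ^ 2) μ) :
    ∫ x, T μ W x = ∫ ω, W ω ^ 2 ∂μ := by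
  rw [integral_eq_lintegral_of_nonneg_ae
    (Filter.Eventually.of_forall fun x => T_nonneg hWm hW hmean x)
    (T_stronglyMeasurable hWm).aestronglyMeasurable,
    lintegral_T hWm hW hmean hW2, ENNReal.toReal_ofReal (integral_nonneg fun ω => sq_nonneg _)]

lemma ftc_pos (f f' : ℝ → ℝ) (hf : ∀ x, HasDerivAt f (f' x) x) {w : ℝ} (hw : 0 < w)
    (hi : IntegrableOn (fun x => f' x * w) (Ioo 0 w) volume) :
    ∫ x in Ioo 0 w, f' x * w = w * (f w - f 0) := by
  have hfw : IntegrableOn f' (Ioo 0 w) volume := by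
    have : f' = fun x => f' x * w * w⁻¹ := by
      funext x; field_simp
    rw [this]
    exact hi.mul_const _
  have hII : IntervalIntegrable f' volume 0 w := by
    rw [intervalIntegrable_iff_integrableOn_Ioo_of_le hw.le]
    exact hfw
  have hFTC : ∫ x in (0:ℝ)..w, f' x = f w - f 0 :=
    intervalIntegral.integral_eq_sub_of_hasDerivAt (fun x _ => hf x) hII
  rw [intervalIntegral.integral_of_le hw.le, integral_Ioc_eq_integral_Ioo] at hFTC
  rw [integral_mul_const, hFTC, mul_comm]

lemma ftc_neg (f f' : ℝ → ℝ) (hf : ∀ x, HasDerivAt f (f' x) x) {w : ℝ} (hw : w < 0)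
    (hi : IntegrableOn (fun x => f' x * -w) (Ico w 0) volume) :
    ∫ x in Ico w 0, f' x * -w = w * (f w - f 0) := by
  have hfw : IntegrableOn f' (Ico w 0) volume := by
    have : f' = fun x => f' x * -w * (-w)⁻¹ := by
      funext x; rw [mul_assoc, mul_inv_cancel₀ (neg_ne_zero.mpr hw.ne), mul_one]
    rw [this]
    exact hi.mul_const _
  have hII : IntervalIntegrable f' volume w 0 := by
    rw [intervalIntegrable_iff_integrableOn_Ioo_of_le hw.le]
    exact hfw.mono_set Ioo_subset_Ico_self
  have hFTC : ∫ x in w..(0:ℝ), f' x = f 0 - f w :=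
    intervalIntegral.integral_eq_sub_of_hasDerivAt (fun x _ => hf x) hII
  rw [intervalIntegral.integral_of_le hw.le, integral_Ioc_eq_integral_Ioo] at hFTC
  rw [integral_mul_const, integral_Ico_eq_integral_Ioo, hFTC]
  ring

theorem key_fubini [IsProbabilityMeasure μ] (hWm : Measurable W) (hW : Integrable W μ)
    (hmean : ∫ ω, W ω ∂μ = 0) (f f' : ℝ → ℝ) (hf : ∀ x, HasDerivAt f (f' x) x)
    (hWf : Integrable (fun ω => W ω * f (W ω)) μ)
    (hint : Integrable (fun x => f' x * T μ W x) volume) :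
    ∫ x, f' x * T μ W x = ∫ ω, W ω * f (W ω) ∂μ := by
  have hf'm : Measurable f' := by
    have : f' = deriv f := funext fun x => ((hf x).deriv).symm
    rw [this]; exact measurable_deriv f
  -- the two product-space functions
  set S₁ : Set (ℝ × Ω) := {q | 0 < q.1 ∧ q.1 < W q.2} with hS₁def
  set S₂ : Set (ℝ × Ω) := {q | W q.2 ≤ q.1 ∧ q.1 < 0} with hS₂def
  have hS₁ : MeasurableSet S₁ :=
    (measurableSet_lt measurable_const measurable_fst).inter (measSet_prod hWm)
  have hS₂ : MeasurableSet S₂ :=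
    (measSet_prod_le hWm).inter (measurableSet_lt measurable_fst measurable_const)
  set F₁ : ℝ × Ω → ℝ := S₁.indicator (fun q => f' q.1 * W q.2) with hF₁def
  set F₂ : ℝ × Ω → ℝ := S₂.indicator (fun q => f' q.1 * -W q.2) with hF₂def
  have hF₁m : StronglyMeasurable F₁ :=
    (((hf'm.comp measurable_fst).mul (hWm.comp measurable_snd)).indicator hS₁).stronglyMeasurable
  have hF₂m : StronglyMeasurable F₂ :=
    (((hf'm.comp measurable_fst).mul
      (hWm.comp measurable_snd).neg).indicator hS₂).stronglyMeasurable
  have hTnn := T_nonneg hWm hW hmean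
  -- pointwise slice identities (inner over ω)
  have hslice₁ : ∀ x : ℝ, 0 < x → ∀ ω,
      F₁ (x, ω) = f' x * Set.indicator {ω' | x < W ω'} W ω := by
    intro x hx ω
    by_cases h : x < W ω
    · rw [hF₁def, Set.indicator_of_mem (show (x, ω) ∈ S₁ from ⟨hx, h⟩),
        Set.indicator_of_mem (show ω ∈ {ω' | x < W ω'} from h)]
    · rw [hF₁def, Set.indicator_of_notMem (fun hq => h hq.2)]
      simp [Set.indicator, h]
  have hslice₁' : ∀ x : ℝ, ¬ 0 < x → ∀ ω, F₁ (x, ω) = 0 := by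
    intro x hx ω
    exact Set.indicator_of_notMem (fun hq => hx hq.1) _
  have hslice₂ : ∀ x : ℝ, x < 0 → ∀ ω,
      F₂ (x, ω) = f' x * Set.indicator {ω' | W ω' ≤ x} (fun ω' => -W ω') ω := by
    intro x hx ω
    by_cases h : W ω ≤ x
    · rw [hF₂def, Set.indicator_of_mem (show (x, ω) ∈ S₂ from ⟨h, hx⟩),
        Set.indicator_of_mem (show ω ∈ {ω' | W ω' ≤ x} from h)]
    · rw [hF₂def, Set.indicator_of_notMem (fun hq => h hq.1)]
      simp [Set.indicator, h]
  have hslice₂' : ∀ x : ℝ, ¬ x < 0 → ∀ ω, F₂ (x, ω) = 0 := by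
    intro x hx ω
    exact Set.indicator_of_notMem (fun hq => hx hq.2) _
  -- integrability on the product space
  have habs : ∀ x : ℝ, |f' x| * T μ W x = ‖f' x * T μ W x‖ := by
    intro x
    rw [Real.norm_eq_abs, abs_mul, abs_of_nonneg (hTnn x)]
  have hfinnorm : ∫⁻ x, ENNReal.ofReal ‖f' x * T μ W x‖ < ⊤ := by
    have := hint.hasFiniteIntegral
    rwa [hasFiniteIntegral_iff_norm] at this
  have hF₁int : Integrable F₁ (volume.prod μ) := by
    refine ⟨hF₁m.aestronglyMeasurable, ?_⟩
    rw [hasFiniteIntegral_iff_norm, lintegral_prod _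
      ((hF₁m.measurable.norm.ennreal_ofReal).aemeasurable)]
    have hxeq : ∀ x : ℝ, (∫⁻ ω, ENNReal.ofReal ‖F₁ (x, ω)‖ ∂μ)
        = Set.indicator (Ioi (0:ℝ)) (fun x => ENNReal.ofReal (|f' x| * T μ W x)) x := by
      intro x
      by_cases hx : 0 < x
      · rw [Set.indicator_of_mem (Set.mem_Ioi.mpr hx)]
        have hpt : ∀ ω, ENNReal.ofReal ‖F₁ (x, ω)‖
            = ENNReal.ofReal (|f' x|)
              * ENNReal.ofReal (Set.indicator {ω' | x < W ω'} W ω) := by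
          intro ω
          rw [hslice₁ x hx ω]
          by_cases h : x < W ω
          · rw [Set.indicator_of_mem (show ω ∈ {ω' | x < W ω'} from h)]
            rw [Real.norm_eq_abs, abs_mul, abs_of_pos (lt_trans hx h),
              ENNReal.ofReal_mul (abs_nonneg _)]
          · simp [Set.indicator, h]
        rw [lintegral_congr hpt, lintegral_const_mul _
          ((hWm.indicator (measSet hWm x)).ennreal_ofReal), lint_pos hWm hW hx.le,
          ← ENNReal.ofReal_mul (abs_nonneg _)]
      · rw [Set.indicator_of_notMem (fun h => hx (Set.mem_Ioi.mp h))]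
        have : ∀ ω, ENNReal.ofReal ‖F₁ (x, ω)‖ = 0 := by
          intro ω; rw [hslice₁' x hx ω]; simp
        rw [lintegral_congr this, lintegral_zero]
    rw [lintegral_congr hxeq]
    refine lt_of_le_of_lt (lintegral_mono fun x => ?_) hfinnorm
    refine le_trans (Set.indicator_le_self _ _ x) ?_
    rw [habs x]
  have hF₂int : Integrable F₂ (volume.prod μ) := by
    refine ⟨hF₂m.aestronglyMeasurable, ?_⟩
    rw [hasFiniteIntegral_iff_norm, lintegral_prod _
      ((hF₂m.measurable.norm.ennreal_ofReal).aemeasurable)]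
    have hxeq : ∀ x : ℝ, (∫⁻ ω, ENNReal.ofReal ‖F₂ (x, ω)‖ ∂μ)
        = Set.indicator (Iio (0:ℝ)) (fun x => ENNReal.ofReal (|f' x| * T μ W x)) x := by
      intro x
      by_cases hx : x < 0
      · rw [Set.indicator_of_mem (Set.mem_Iio.mpr hx)]
        have hpt : ∀ ω, ENNReal.ofReal ‖F₂ (x, ω)‖
            = ENNReal.ofReal (|f' x|)
              * ENNReal.ofReal (Set.indicator {ω' | W ω' ≤ x} (fun ω' => -W ω') ω) := by
          intro ω
          rw [hslice₂ x hx ω]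
          by_cases h : W ω ≤ x
          · rw [Set.indicator_of_mem (show ω ∈ {ω' | W ω' ≤ x} from h)]
            rw [Real.norm_eq_abs, abs_mul, abs_of_pos (by linarith : 0 < -W ω),
              ENNReal.ofReal_mul (abs_nonneg _)]
          · simp [Set.indicator, h]
        rw [lintegral_congr hpt, lintegral_const_mul _ (f := fun ω =>
            ENNReal.ofReal (Set.indicator {ω' | W ω' ≤ x} (fun ω' => -W ω') ω))
          ((hWm.neg.indicator (measSetLe hWm x)).ennreal_ofReal),
          lint_neg hWm hW hmean hx, ← ENNReal.ofReal_mul (abs_nonneg _)]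
      · rw [Set.indicator_of_notMem (fun h => hx (Set.mem_Iio.mp h))]
        have : ∀ ω, ENNReal.ofReal ‖F₂ (x, ω)‖ = 0 := by
          intro ω; rw [hslice₂' x hx ω]; simp
        rw [lintegral_congr this, lintegral_zero]
    rw [lintegral_congr hxeq]
    refine lt_of_le_of_lt (lintegral_mono fun x => ?_) hfinnorm
    refine le_trans (Set.indicator_le_self _ _ x) ?_
    rw [habs x]
  -- the ω-section targets
  set A : Ω → ℝ := fun ω => if 0 < W ω then W ω * (f (W ω) - f 0) else 0 with hAdef
  set B : Ω → ℝ := fun ω => if W ω < 0 then W ω * (f (W ω) - f 0) else 0 with hBdef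
  -- x-sections of F₁, F₂
  have hxsec₁ : ∀ ω, (fun x => F₁ (x, ω))
      = Set.indicator (Ioo 0 (W ω)) (fun x => f' x * W ω) := by
    intro ω; funext x
    by_cases h : 0 < x ∧ x < W ω
    · rw [hF₁def, Set.indicator_of_mem (show (x, ω) ∈ S₁ from h),
        Set.indicator_of_mem (Set.mem_Ioo.mpr h)]
    · rw [hF₁def, Set.indicator_of_notMem (show (x, ω) ∉ S₁ from h),
        Set.indicator_of_notMem (fun hm => h (Set.mem_Ioo.mp hm))]
  have hxsec₂ : ∀ ω, (fun x => F₂ (x, ω))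
      = Set.indicator (Ico (W ω) 0) (fun x => f' x * -W ω) := by
    intro ω; funext x
    by_cases h : W ω ≤ x ∧ x < 0
    · rw [hF₂def, Set.indicator_of_mem (show (x, ω) ∈ S₂ from h),
        Set.indicator_of_mem (Set.mem_Ico.mpr h)]
    · rw [hF₂def, Set.indicator_of_notMem (show (x, ω) ∉ S₂ from h),
        Set.indicator_of_notMem (fun hm => h (Set.mem_Ico.mp hm))]
  -- a.e. identification of the inner x-integrals
  have hsec₁ae : ∀ᵐ ω ∂μ, (∫ x, F₁ (x, ω)) = A ω := by
    filter_upwards [hF₁int.prod_left_ae] with ω hω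
    rw [hxsec₁ ω] at hω ⊢
    rw [integral_indicator measurableSet_Ioo]
    by_cases h : 0 < W ω
    · rw [ftc_pos f f' hf h ((integrable_indicator_iff measurableSet_Ioo).mp hω), hAdef]
      simp [h]
    · rw [Set.Ioo_eq_empty h]
      simp [hAdef, h]
  have hsec₂ae : ∀ᵐ ω ∂μ, (∫ x, F₂ (x, ω)) = B ω := by
    filter_upwards [hF₂int.prod_left_ae] with ω hω
    rw [hxsec₂ ω] at hω ⊢
    rw [integral_indicator measurableSet_Ico]
    by_cases h : W ω < 0
    · rw [ftc_neg f f' hf h ((integrable_indicator_iff measurableSet_Ico).mp hω), hBdef]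
      simp [h]
    · rw [Set.Ico_eq_empty h]
      simp [hBdef, h]
  -- the two halves of the x-integral
  have hIoi : ∫ x in Ioi (0:ℝ), f' x * T μ W x = ∫ ω, A ω ∂μ := by
    have e1 : ∫ x in Ioi (0:ℝ), f' x * T μ W x
        = ∫ x, ∫ ω, F₁ (x, ω) ∂μ := by
      rw [← integral_indicator measurableSet_Ioi]
      refine integral_congr_ae (Filter.Eventually.of_forall fun x => ?_)
      show (Ioi (0:ℝ)).indicator (fun x => f' x * T μ W x) x = ∫ ω, F₁ (x, ω) ∂μ
      by_cases hx : 0 < x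
      · rw [Set.indicator_of_mem (Set.mem_Ioi.mpr hx)]
        rw [integral_congr_ae (Filter.Eventually.of_forall (hslice₁ x hx)),
          integral_const_mul, T]
      · rw [Set.indicator_of_notMem (fun h => hx (Set.mem_Ioi.mp h))]
        rw [integral_congr_ae (Filter.Eventually.of_forall fun ω => hslice₁' x hx ω),
          integral_zero]
    have e2 : (∫ x, ∫ ω, F₁ (x, ω) ∂μ) = ∫ ω, (∫ x, F₁ (x, ω)) ∂μ :=
      integral_integral_swap (f := fun x ω => F₁ (x, ω)) (by exact hF₁int)
    rw [e1, e2]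
    exact integral_congr_ae hsec₁ae
  have hIio : ∫ x in Iio (0:ℝ), f' x * T μ W x = ∫ ω, B ω ∂μ := by
    have e1 : ∫ x in Iio (0:ℝ), f' x * T μ W x
        = ∫ x, ∫ ω, F₂ (x, ω) ∂μ := by
      rw [← integral_indicator measurableSet_Iio]
      refine integral_congr_ae (Filter.Eventually.of_forall fun x => ?_)
      show (Iio (0:ℝ)).indicator (fun x => f' x * T μ W x) x = ∫ ω, F₂ (x, ω) ∂μ
      by_cases hx : x < 0
      · rw [Set.indicator_of_mem (Set.mem_Iio.mpr hx)]
        rw [integral_congr_ae (Filter.Eventually.of_forall (hslice₂ x hx)),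
          integral_const_mul, ← T_eq_neg hWm hW hmean x]
      · rw [Set.indicator_of_notMem (fun h => hx (Set.mem_Iio.mp h))]
        rw [integral_congr_ae (Filter.Eventually.of_forall fun ω => hslice₂' x hx ω),
          integral_zero]
    have e2 : (∫ x, ∫ ω, F₂ (x, ω) ∂μ) = ∫ ω, (∫ x, F₂ (x, ω)) ∂μ :=
      integral_integral_swap (f := fun x ω => F₂ (x, ω)) (by exact hF₂int)
    rw [e1, e2]
    exact integral_congr_ae hsec₂ae
  -- integrability of A and B
  have hAint : Integrable A μ :=
    (hF₁int.integral_prod_right).congr hsec₁ae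
  have hBint : Integrable B μ :=
    (hF₂int.integral_prod_right).congr hsec₂ae
  -- assemble
  have hsplit : ∫ x, f' x * T μ W x
      = (∫ x in Iio (0:ℝ), f' x * T μ W x) + ∫ x in Ici (0:ℝ), f' x * T μ W x :=
    (intervalIntegral.integral_Iio_add_Ici hint.integrableOn hint.integrableOn).symm
  rw [hsplit, integral_Ici_eq_integral_Ioi, hIio, hIoi, ← integral_add hBint hAint]
  have hBA : ∀ ω, B ω + A ω = W ω * f (W ω) - W ω * f 0 := by
    intro ω
    rcases lt_trichotomy (W ω) 0 with h | h | h
    · rw [hAdef, hBdef]; simp only [h, if_pos, if_neg (by linarith : ¬ 0 < W ω)]; ring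
    · rw [hAdef, hBdef]; simp [h]
    · rw [hAdef, hBdef]; simp only [h, if_pos, if_neg (by linarith : ¬ W ω < 0)]; ring
  rw [integral_congr_ae (Filter.Eventually.of_forall hBA),
    integral_sub hWf (hW.mul_const (f 0)), integral_mul_const, hmean, zero_mul, sub_zero]

end ZeroBiasAux

open ZeroBiasAux

/-- Goldstein–Reinert zero-bias identity. Let `W` be a real random variable with mean zero and
finite positive variance `v = σ²`. Then `p*(x) = E[W ⋅ 1(W > x)] / σ²` is nonnegative and
integrates to `1`, and the measure `μ*` with density `p*` satisfies
`E[W f(W)] = σ² ∫ f' dμ*` for every differentiable `f` with `E|W f(W)| < ∞` and `f'`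
integrable with respect to `μ*`. -/
theorem zero_bias_distribution {Ω : Type*} [MeasurableSpace Ω]
    (μ : Measure Ω) [IsProbabilityMeasure μ]
    (W : Ω → ℝ) (v : ℝ) (hv : 0 < v)
    (hW : Integrable W μ) (hmean : ∫ ω, W ω ∂μ = 0)
    (hW2 : Integrable (fun ω => W ω ^ 2) μ) (hvar : ∫ ω, W ω ^ 2 ∂μ = v)
    (p : ℝ → ℝ) (hp : ∀ x : ℝ, p x = (∫ ω, Set.indicator {ω' | x < W ω'} W ω ∂μ) / v)
    (μstar : Measure ℝ)
    (hμstar : μstar = volume.withDensity fun x => ENNReal.ofReal (p x)) :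
    (∀ x : ℝ, 0 ≤ p x) ∧ (∫ x : ℝ, p x = 1) ∧ IsProbabilityMeasure μstar ∧
      ∀ f f' : ℝ → ℝ, (∀ x : ℝ, HasDerivAt f (f' x) x) →
        Integrable (fun ω => W ω * f (W ω)) μ → Integrable f' μstar →
        ∫ ω, W ω * f (W ω) ∂μ = v * ∫ x, f' x ∂μstar := by
  -- replace `W` by a measurable representative `W₀`
  set W₀ : Ω → ℝ := hW.1.mk W with hW₀def
  have hW₀m : Measurable W₀ := hW.1.stronglyMeasurable_mk.measurable
  have hae : W =ᵐ[μ] W₀ := hW.1.ae_eq_mk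
  have hW₀ : Integrable W₀ μ := hW.congr hae
  have hmean₀ : ∫ ω, W₀ ω ∂μ = 0 := by rw [← integral_congr_ae hae]; exact hmean
  have hsq : (fun ω => W ω ^ 2) =ᵐ[μ] fun ω => W₀ ω ^ 2 := hae.mono fun ω h => by simp only [h]
  have hW₀2 : Integrable (fun ω => W₀ ω ^ 2) μ := hW2.congr hsq
  have hvar₀ : ∫ ω, W₀ ω ^ 2 ∂μ = v := by rw [← integral_congr_ae hsq]; exact hvar
  have hTeq : ∀ x : ℝ, (∫ ω, Set.indicator {ω' | x < W ω'} W ω ∂μ) = T μ W₀ x := by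
    intro x
    exact integral_congr_ae (hae.mono fun ω h => by simp [Set.indicator, h])
  have hp' : ∀ x, p x = T μ W₀ x / v := fun x => by rw [hp x, hTeq x]
  have hTnn : ∀ x, 0 ≤ T μ W₀ x := T_nonneg hW₀m hW₀ hmean₀
  have hpnn : ∀ x, 0 ≤ p x := fun x => by rw [hp' x]; exact div_nonneg (hTnn x) hv.le
  have hTint : Integrable (T μ W₀) volume := T_integrable hW₀m hW₀ hmean₀ hW₀2
  have hTval : ∫ x, T μ W₀ x = v := by rw [integral_T hW₀m hW₀ hmean₀ hW₀2, hvar₀]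
  have hpfun : p = fun x => T μ W₀ x / v := funext hp'
  have hpm : Measurable p := by
    rw [hpfun]; exact (T_stronglyMeasurable hW₀m).measurable.div_const v
  have hpint : Integrable p volume := by rw [hpfun]; exact hTint.div_const v
  have hpone : ∫ x, p x = 1 := by
    rw [hpfun]
    simp only [div_eq_mul_inv]
    rw [integral_mul_const, hTval, mul_inv_cancel₀ hv.ne']
  refine ⟨hpnn, hpone, ?_, ?_⟩
  · refine ⟨?_⟩
    rw [hμstar, withDensity_apply _ MeasurableSet.univ, Measure.restrict_univ,
      ← ofReal_integral_eq_lintegral_ofReal hpint (Filter.Eventually.of_forall hpnn),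
      hpone, ENNReal.ofReal_one]
  · intro f f' hf hWf hf'int
    have hWf₀ : Integrable (fun ω => W₀ ω * f (W₀ ω)) μ :=
      hWf.congr (hae.mono fun ω h => by simp only [h])
    -- translate integrability of `f'` w.r.t. `μstar`
    rw [hμstar] at hf'int
    rw [integrable_withDensity_iff hpm.ennreal_ofReal
      (Filter.Eventually.of_forall fun x => ENNReal.ofReal_lt_top)] at hf'int
    have hf'p : Integrable (fun x => f' x * p x) volume := by
      refine hf'int.congr (Filter.Eventually.of_forall fun x => ?_)
      show f' x * (ENNReal.ofReal (p x)).toReal = f' x * p x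
      rw [ENNReal.toReal_ofReal (hpnn x)]
    have heq : ∀ x, f' x * p x * v = f' x * T μ W₀ x := by
      intro x
      rw [hp' x]
      field_simp
    have hint : Integrable (fun x => f' x * T μ W₀ x) volume :=
      (hf'p.mul_const v).congr (Filter.Eventually.of_forall heq)
    have hkey := key_fubini hW₀m hW₀ hmean₀ f f' hf hWf₀ hint
    -- compute `∫ f' ∂μstar`
    have hstar : ∫ x, f' x ∂μstar = ∫ x, p x * f' x := by
      rw [hμstar]
      have : (fun x => ENNReal.ofReal (p x)) = fun x => ((p x).toNNReal : ENNReal) := rfl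
      rw [this, integral_withDensity_eq_integral_smul hpm.real_toNNReal f']
      refine integral_congr_ae (Filter.Eventually.of_forall fun x => ?_)
      show (p x).toNNReal • f' x = p x * f' x
      rw [NNReal.smul_def, Real.coe_toNNReal _ (hpnn x), smul_eq_mul]
    have : ∫ ω, W ω * f (W ω) ∂μ = ∫ ω, W₀ ω * f (W₀ ω) ∂μ :=
      integral_congr_ae (hae.mono fun ω h => by simp only [h])
    rw [this, ← hkey, hstar, ← integral_const_mul]
    refine integral_congr_ae (Filter.Eventually.of_forall fun x => ?_)
    show f' x * T μ W₀ x = v * (p x * f' x)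
    rw [hp' x]
    field_simp
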